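/- Fix real numbers $D_g > 0$, $D_j > 0$ ($j \neq m$), $\bar F = 1/\sum_{j\neq m} 1/D_j$, and $F(\kappa) = \min\{\kappa\bar F, \min_{j\neq m} D_j\}$ for real $\kappa \ge 0$. Define $I_m^{DGFi} = \max\{D_g + F(K-1),\ F(K)\}$ and $I_m^* = \max_{u\in[0,1]}\, [\,u D_g + F(K-u)\,]$ for an integer $K \ge 1$. Then $I_m^{DGFi} \le I_m^*$, with equality if and only if $D_g \ge \bar F$, or $K \le \tilde K$, or $K \ge \tilde K + 1$, where $\tilde K = (\min_{j\neq m} D_j)/\bar F$. -/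

import Mathlib

open Finset

set_option maxHeartbeats 1000000 in
theorem stmt_15 {ι : Type*} (J : Finset ι) (hJ : J.Nonempty)
    (D : ι → ℝ) (hD : ∀ j ∈ J, 0 < D j) (Dg : ℝ) (hDg : 0 < Dg)
    (barF : ℝ) (hbarF : barF = (∑ j ∈ J, 1 / D j)⁻¹)
    (tildeK : ℝ) (htildeK : tildeK = J.inf' hJ D / barF)
    (F : ℝ → ℝ) (hF : ∀ κ, 0 ≤ κ → F κ = min (κ * barF) (J.inf' hJ D))
    (K : ℕ) (hK : 1 ≤ K)
    (IDGFi Istar : ℝ)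
    (hI : IDGFi = max (Dg + F ((K : ℝ) - 1)) (F K))
    (hIs : Istar = sSup ((fun u => u * Dg + F ((K : ℝ) - u)) '' Set.Icc (0:ℝ) 1)) :
    IDGFi ≤ Istar ∧
      (IDGFi = Istar ↔ (barF ≤ Dg ∨ (K : ℝ) ≤ tildeK ∨ tildeK + 1 ≤ (K : ℝ))) := by
  obtain ⟨j0, hj0, hj0eq⟩ := Finset.exists_mem_eq_inf' hJ D
  set M := J.inf' hJ D with hMdef
  have hMpos : 0 < M := hj0eq ▸ hD j0 hj0
  have hbarFpos : 0 < barF := by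
    rw [hbarF]
    exact inv_pos.2 (Finset.sum_pos (fun j hj => by
      have := hD j hj; positivity) hJ)
  have htKpos : 0 < tildeK := by rw [htildeK]; positivity
  have hMtK : M = tildeK * barF := by rw [htildeK]; field_simp
  have hK1 : (1:ℝ) ≤ (K:ℝ) := by exact_mod_cast hK
  have hFval : ∀ u ∈ Set.Icc (0:ℝ) 1, F ((K:ℝ) - u) = min (((K:ℝ) - u) * barF) M := by
    intro u hu
    exact hF _ (by linarith [hu.2])
  have hBdd : BddAbove ((fun u => u * Dg + F ((K:ℝ) - u)) '' Set.Icc (0:ℝ) 1) := by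
    refine ⟨Dg + M, ?_⟩
    rintro x ⟨u, hu, rfl⟩
    have h1 : F ((K:ℝ) - u) ≤ M := by rw [hFval u hu]; exact min_le_right _ _
    have h2 : u * Dg ≤ Dg := by nlinarith [hu.1, hu.2]
    simp only
    linarith
  have hne : ((fun u => u * Dg + F ((K:ℝ) - u)) '' Set.Icc (0:ℝ) 1).Nonempty :=
    ⟨_, ⟨0, by norm_num, rfl⟩⟩
  have hle : ∀ u ∈ Set.Icc (0:ℝ) 1, u * Dg + F ((K:ℝ) - u) ≤ Istar := by
    intro u hu; rw [hIs]; exact le_csSup hBdd ⟨u, hu, rfl⟩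
  have hg0 := hle 0 (by norm_num)
  have hg1 := hle 1 (by norm_num)
  simp only [zero_mul, zero_add, one_mul, sub_zero] at hg0 hg1
  have hfwd : IDGFi ≤ Istar := by rw [hI]; exact max_le hg1 hg0
  refine ⟨hfwd, ?_, ?_⟩
  · -- equality → condition, by contraposition
    intro heq
    by_contra hcon
    push_neg at hcon
    obtain ⟨h1, h2, h3⟩ := hcon
    set u0 : ℝ := (K:ℝ) - tildeK with hu0def
    have hu0mem : u0 ∈ Set.Icc (0:ℝ) 1 := ⟨by simp [hu0def]; linarith, by simp [hu0def]; linarith⟩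
    have hgu0 := hle u0 hu0mem
    have hKu0 : (K:ℝ) - u0 = tildeK := by ring
    have hFu0 : F ((K:ℝ) - u0) = M := by
      rw [hKu0, hF tildeK (le_of_lt htKpos), ← hMtK, min_self]
    have hFK : F (K:ℝ) = M := by
      rw [hF (K:ℝ) (by linarith)]
      exact min_eq_right (by nlinarith)
    have hFK1 : F ((K:ℝ) - 1) = ((K:ℝ) - 1) * barF := by
      rw [hF _ (by linarith)]
      exact min_eq_left (by nlinarith)
    have hlt : IDGFi < Istar := by
      rw [hI, hFK, hFK1]
      have e1 : Dg + ((K:ℝ) - 1) * barF < u0 * Dg + M := by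
        rw [hMtK]; nlinarith
      have e2 : M < u0 * Dg + M := by nlinarith
      calc max (Dg + ((K:ℝ) - 1) * barF) M < u0 * Dg + M := max_lt e1 e2
        _ ≤ Istar := by rw [← hFu0]; exact hgu0
    exact absurd heq (ne_of_lt hlt)
  · have common : ∀ B : ℝ, (∀ u ∈ Set.Icc (0:ℝ) 1,
        u * Dg + F ((K:ℝ) - u) ≤ max (Dg + F ((K:ℝ) - 1)) (F (K:ℝ))) → IDGFi = Istar := by
      intro _ hall
      refine le_antisymm hfwd ?_
      rw [hIs]
      apply csSup_le hne
      rintro x ⟨u, hu, rfl⟩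
      rw [hI]
      exact hall u hu
    rintro (h | h | h)
    · refine common 0 ?_
      intro u hu
      have key : min (((K:ℝ) - u) * barF) M ≤ min (((K:ℝ) - 1) * barF) M + (1 - u) * barF := by
        rcases le_total (((K:ℝ) - 1) * barF) M with h' | h'
        · rw [min_eq_left h']
          calc min (((K:ℝ) - u) * barF) M ≤ ((K:ℝ) - u) * barF := min_le_left _ _
            _ = ((K:ℝ) - 1) * barF + (1 - u) * barF := by ring
        · rw [min_eq_right h']
          have : min (((K:ℝ) - u) * barF) M ≤ M := min_le_right _ _
          nlinarith [hu.2]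
      refine le_max_of_le_left ?_
      rw [hFval u hu, hF _ (by linarith)]
      nlinarith [hu.1, hu.2]
    · refine common 0 ?_
      intro u hu
      have hFu : F ((K:ℝ) - u) = ((K:ℝ) - u) * barF := by
        rw [hFval u hu]
        exact min_eq_left (by rw [hMtK]; nlinarith [hu.1])
      have hFK : F (K:ℝ) = (K:ℝ) * barF := by
        rw [hF _ (by linarith)]
        exact min_eq_left (by rw [hMtK]; nlinarith)
      have hFK1 : F ((K:ℝ) - 1) = ((K:ℝ) - 1) * barF := by
        rw [hF _ (by linarith)]
        exact min_eq_left (by rw [hMtK]; nlinarith)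
      rw [hFu, hFK, hFK1]
      rcases le_total Dg barF with h' | h'
      · refine le_max_of_le_right ?_
        nlinarith [hu.1]
      · refine le_max_of_le_left ?_
        nlinarith [hu.2]
    · refine common 0 ?_
      intro u hu
      have hFu : F ((K:ℝ) - u) = M := by
        rw [hFval u hu]
        exact min_eq_right (by rw [hMtK]; nlinarith [hu.1, hu.2])
      have hFK1 : F ((K:ℝ) - 1) = M := by
        rw [hF _ (by linarith)]
        exact min_eq_right (by rw [hMtK]; nlinarith)
      refine le_max_of_le_left ?_
      rw [hFu, hFK1]
      nlinarith [hu.1, hu.2]
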